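/- arXiv:2007.05747 — 2 statements merged into one kernel-verified Lean document; each statement's English description precedes it below -/
import Mathlib

section
/- Let f : ℝⁿ → ℝ be differentiable with L-Lipschitz gradient, let β > L/2, let w ∈ ℝⁿ with w ≥ 0, λ > 0, and let x⁺ minimize over x the function ⟨∇f(xₖ), x - xₖ⟩ + (β/2)‖x - xₖ‖² + λ·Σᵢ wᵢ|xᵢ|. Then f(x⁺) + λ·Σᵢ wᵢ|x⁺ᵢ| ≤ f(xₖ) + λ·Σᵢ wᵢ|xₖᵢ| − (β − L/2)·‖x⁺ − xₖ‖². -/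
open scoped RealInnerProductSpace

lemma descent_lemma (n : ℕ) (f : EuclideanSpace ℝ (Fin n) → ℝ)
    (L : ℝ) (hL : 0 ≤ L) (hf : Differentiable ℝ f)
    (hlip : ∀ x y, ‖gradient f x - gradient f y‖ ≤ L * ‖x - y‖)
    (x y : EuclideanSpace ℝ (Fin n)) :
    f y ≤ f x + inner ℝ (gradient f x) (y - x) + L / 2 * ‖y - x‖ ^ 2 := by
  set d := y - x with hd
  have hgradcont : Continuous (gradient f) := by
    have : LipschitzWith L.toNNReal (gradient f) := by
      apply LipschitzWith.of_dist_le_mul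
      intro a b
      simp only [dist_eq_norm, Real.coe_toNNReal _ hL]
      exact hlip a b
    exact this.continuous
  have hφ : ∀ t : ℝ, HasDerivAt (fun t : ℝ => f (x + t • d))
      (inner ℝ (gradient f (x + t • d)) d) t := by
    intro t
    have h1 : HasGradientAt f (gradient f (x + t • d)) (x + t • d) :=
      (hf _).hasGradientAt
    have h2 : HasDerivAt (fun t : ℝ => x + t • d) d t := by
      simpa using ((hasDerivAt_id t).smul_const d).const_add x
    have := h1.hasFDerivAt.comp_hasDerivAt t h2
    simpa [InnerProductSpace.toDual_apply_apply, Function.comp_def] using this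
  have hcont : Continuous (fun t : ℝ => inner ℝ (gradient f (x + t • d)) d : ℝ → ℝ) := by
    exact (hgradcont.comp (continuous_const.add (continuous_id.smul continuous_const))).inner continuous_const
  have hFTC : f y - f x = ∫ t in (0:ℝ)..1, inner ℝ (gradient f (x + t • d)) d := by
    rw [intervalIntegral.integral_eq_sub_of_hasDerivAt (fun t _ => hφ t)
      (hcont.intervalIntegrable 0 1)]
    simp [hd]
  have hbound : ∀ t ∈ Set.Icc (0:ℝ) 1,
      (inner ℝ (gradient f (x + t • d)) d : ℝ) ≤ inner ℝ (gradient f x) d + L * t * ‖d‖ ^ 2 := by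
    intro t ht
    have h1 : (inner ℝ (gradient f (x + t • d) - gradient f x) d : ℝ)
        ≤ ‖gradient f (x + t • d) - gradient f x‖ * ‖d‖ := real_inner_le_norm _ _
    have h2 : ‖gradient f (x + t • d) - gradient f x‖ ≤ L * (t * ‖d‖) := by
      have := hlip (x + t • d) x
      simpa [norm_smul, abs_of_nonneg ht.1] using this
    have h3 : ‖gradient f (x + t • d) - gradient f x‖ * ‖d‖ ≤ L * t * ‖d‖ ^ 2 := by
      nlinarith [norm_nonneg d, norm_nonneg (gradient f (x + t • d) - gradient f x)]
    have := h1.trans h3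
    rw [inner_sub_left] at this
    linarith
  have hint : (∫ t in (0:ℝ)..1, inner ℝ (gradient f (x + t • d)) d : ℝ)
      ≤ ∫ t in (0:ℝ)..1, (inner ℝ (gradient f x) d + L * t * ‖d‖ ^ 2 : ℝ) := by
    apply intervalIntegral.integral_mono_on (by norm_num)
      (hcont.intervalIntegrable 0 1)
      (Continuous.intervalIntegrable (by fun_prop) 0 1)
    exact hbound
  have hval : (∫ t in (0:ℝ)..1, (inner ℝ (gradient f x) d + L * t * ‖d‖ ^ 2 : ℝ))
      = inner ℝ (gradient f x) d + L / 2 * ‖d‖ ^ 2 := by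
    have hi2 : IntervalIntegrable (fun t : ℝ => L * t * ‖d‖ ^ 2) MeasureTheory.volume 0 1 :=
      Continuous.intervalIntegrable (by fun_prop) 0 1
    rw [intervalIntegral.integral_add intervalIntegrable_const hi2]
    have : (∫ t in (0:ℝ)..1, L * t * ‖d‖ ^ 2) = L / 2 * ‖d‖ ^ 2 := by
      have heq : (fun t : ℝ => L * t * ‖d‖ ^ 2) = fun t : ℝ => (L * ‖d‖ ^ 2) * t := by
        funext t; ring
      rw [heq, intervalIntegral.integral_const_mul, integral_id]
      ring
    rw [this]
    simp
  linarith [hFTC, hint.trans_eq hval]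

theorem pirl1_sufficient_decrease (n : ℕ) (f : EuclideanSpace ℝ (Fin n) → ℝ)
    (L : ℝ) (hL : 0 ≤ L) (hf : Differentiable ℝ f)
    (hlip : ∀ x y, ‖gradient f x - gradient f y‖ ≤ L * ‖x - y‖)
    (β lam : ℝ) (hβ : L / 2 < β) (hlam : 0 < lam)
    (w : Fin n → ℝ) (hw : ∀ i, 0 ≤ w i)
    (xk xp : EuclideanSpace ℝ (Fin n))
    (hmin : ∀ x : EuclideanSpace ℝ (Fin n),
      inner ℝ (gradient f xk) (xp - xk) + (β / 2) * ‖xp - xk‖ ^ 2 + lam * ∑ i, w i * |xp i|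
        ≤ inner ℝ (gradient f xk) (x - xk) + (β / 2) * ‖x - xk‖ ^ 2 + lam * ∑ i, w i * |x i|) :
    f xp + lam * ∑ i, w i * |xp i|
      ≤ f xk + lam * ∑ i, w i * |xk i| - (β - L / 2) * ‖xp - xk‖ ^ 2 := by
  have hdesc := descent_lemma n f L hL hf hlip xk xp
  set d := xp - xk with hd
  set A : ℝ := inner ℝ (gradient f xk) d with hA
  set Sp : ℝ := ∑ i, w i * |xp i| with hSp
  set Sk : ℝ := ∑ i, w i * |xk i| with hSk
  set D : ℝ := ‖d‖ ^ 2 with hD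
  have hDnn : 0 ≤ D := by positivity
  -- key: strong decrease from minimality
  have key : ∀ t ∈ Set.Ioc (0:ℝ) 1, A + lam * Sp + β / 2 * (2 - t) * D ≤ lam * Sk := by
    intro t ht
    obtain ⟨ht0, ht1⟩ := ht
    set x : EuclideanSpace ℝ (Fin n) := xk + (1 - t) • d with hxdef
    have hx_sub : x - xk = (1 - t) • d := by simp [hxdef]
    have hinner : (inner ℝ (gradient f xk) (x - xk) : ℝ) = (1 - t) * A := by
      rw [hx_sub, real_inner_smul_right]
    have hnorm : ‖x - xk‖ ^ 2 = (1 - t) ^ 2 * D := by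
      rw [hx_sub, norm_smul]
      simp [hD, mul_pow, abs_of_nonneg (by linarith : (0:ℝ) ≤ 1 - t)]
    have hxi : ∀ i, x i = (1 - t) * xp i + t * xk i := by
      intro i
      simp [hxdef, hd, PiLp.add_apply, PiLp.smul_apply, PiLp.sub_apply, smul_eq_mul]
      ring
    have hsum : (∑ i, w i * |x i|) ≤ (1 - t) * Sp + t * Sk := by
      rw [hSp, hSk, Finset.mul_sum, Finset.mul_sum, ← Finset.sum_add_distrib]
      apply Finset.sum_le_sum
      intro i _
      rw [hxi i]
      have habs : |(1 - t) * xp i + t * xk i| ≤ (1 - t) * |xp i| + t * |xk i| := by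
        calc |(1 - t) * xp i + t * xk i| ≤ |(1 - t) * xp i| + |t * xk i| := abs_add_le _ _
          _ = (1 - t) * |xp i| + t * |xk i| := by
              rw [abs_mul, abs_mul, abs_of_nonneg (by linarith : (0:ℝ) ≤ 1 - t),
                abs_of_nonneg ht0.le]
      nlinarith [hw i, abs_nonneg (xp i), abs_nonneg (xk i)]
    have h := hmin x
    rw [hinner, hnorm] at h
    have h2 : A + β / 2 * D + lam * Sp
        ≤ (1 - t) * A + β / 2 * ((1 - t) ^ 2 * D) + lam * ((1 - t) * Sp + t * Sk) := by
      calc A + β / 2 * D + lam * Sp ≤ (1 - t) * A + β / 2 * ((1 - t) ^ 2 * D) + lam * ∑ i, w i * |x i| := h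
        _ ≤ _ := by nlinarith
    have h4 : t * (A + lam * Sp + β / 2 * (2 - t) * D) ≤ t * (lam * Sk) := by nlinarith
    exact le_of_mul_le_mul_left h4 ht0
  have key2 : A + lam * Sp + β * D ≤ lam * Sk := by
    have htend : Filter.Tendsto (fun t : ℝ => A + lam * Sp + β / 2 * (2 - t) * D)
        (nhdsWithin 0 (Set.Ioi 0)) (nhds (A + lam * Sp + β / 2 * (2 - 0) * D)) := by
      apply Filter.Tendsto.mono_left _ nhdsWithin_le_nhds
      exact (tendsto_const_nhds.add (((tendsto_const_nhds.sub Filter.tendsto_id).const_mul (β/2)).mul tendsto_const_nhds))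
    have hev : ∀ᶠ t in nhdsWithin (0:ℝ) (Set.Ioi 0),
        A + lam * Sp + β / 2 * (2 - t) * D ≤ lam * Sk := by
      filter_upwards [Ioo_mem_nhdsGT_of_mem (by norm_num : (0:ℝ) ∈ Set.Ico 0 1)]
        with t ht
      exact key t ⟨ht.1, ht.2.le⟩
    have := le_of_tendsto htend hev
    linarith [this]
  linarith [hdesc, key2]
end

section
/- Let {Δ_t} be a positive nonincreasing sequence converging to 0, let θ ∈ (1/2, 1), and suppose there is C > 0 with Δ_t^{θ/(1−θ)} ≤ C·(Δ_{t−1} − Δ_t) for all t ≥ N. Then there is a constant C' > 0 such that Δ_t ≤ C'·t^{−(1−θ)/(2θ−1)} for all sufficiently large t. -/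
open Real

lemma tangent_rpow (p a b : ℝ) (hp : 0 < p) (ha : 0 < a) (hab : a ≤ b) :
    p * b ^ (-p - 1) * (b - a) ≤ a ^ (-p) - b ^ (-p) := by
  have hb : 0 < b := lt_of_lt_of_le ha hab
  set x := b / a with hx
  have hx1 : 1 ≤ x := (one_le_div ha).mpr hab
  have hx0 : 0 < x := lt_of_lt_of_le one_pos hx1
  have hB : 1 + (p + 1) * (x - 1) ≤ x ^ (p + 1) := by
    have := one_add_mul_self_le_rpow_one_add (s := x - 1) (by linarith) (p := p + 1) (by linarith)
    simpa using this
  have hxp1 : x ^ (p + 1) = x ^ p * x := by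
    rw [rpow_add_one hx0.ne']
  have key : p * (b - a) / b ≤ x ^ p - 1 := by
    rw [hxp1] at hB
    have h2 : 1 + p * (x - 1) / x ≤ x ^ p := by
      rw [add_comm, div_add' _ _ _ hx0.ne', div_le_iff₀ hx0]
      nlinarith
    have h3 : p * (x - 1) / x = p * (b - a) / b := by
      rw [hx]; field_simp
    linarith [h3 ▸ h2]
  have hbp : (0:ℝ) < b ^ (-p) := rpow_pos_of_pos hb _
  have hmul := mul_le_mul_of_nonneg_right key hbp.le
  have e1 : (x ^ p - 1) * b ^ (-p) = a ^ (-p) - b ^ (-p) := by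
    have : x ^ p * b ^ (-p) = a ^ (-p) := by
      rw [hx, div_rpow hb.le ha.le, rpow_neg hb.le, rpow_neg ha.le]
      field_simp
    rw [sub_mul, this, one_mul]
  have e2 : p * (b - a) / b * b ^ (-p) = p * b ^ (-p - 1) * (b - a) := by
    rw [show (-p - 1 : ℝ) = -p + (-1) by ring, rpow_add hb, rpow_neg_one]
    field_simp
  rw [e1] at hmul
  rw [← e2]
  exact hmul

theorem kl_recursion_sublinear_rate (θ : ℝ) (hθ1 : 1 / 2 < θ) (hθ2 : θ < 1)
    (Δ : ℕ → ℝ) (hpos : ∀ t, 0 < Δ t) (hmono : Antitone Δ)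
    (hlim : Filter.Tendsto Δ Filter.atTop (nhds 0))
    (C : ℝ) (hC : 0 < C) (N : ℕ)
    (hrec : ∀ t, N ≤ t → Δ t ^ (θ / (1 - θ)) ≤ C * (Δ (t - 1) - Δ t)) :
    ∃ C' : ℝ, 0 < C' ∧ ∃ M : ℕ, ∀ t, M ≤ t →
      Δ t ≤ C' * (t : ℝ) ^ (-(1 - θ) / (2 * θ - 1)) := by
  have h1θ : 0 < 1 - θ := by linarith
  have h2θ : 0 < 2 * θ - 1 := by linarith
  set p : ℝ := (2 * θ - 1) / (1 - θ) with hpdef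
  have hp : 0 < p := div_pos h2θ h1θ
  have hθp : θ / (1 - θ) = p + 1 := by
    rw [hpdef]; field_simp; ring
  have h2p : (1:ℝ) < 2 ^ p := by
    rw [show (1:ℝ) = 2 ^ (0:ℝ) by simp]
    exact rpow_lt_rpow_of_exponent_lt one_lt_two hp
  set μ₁ : ℝ := p / (C * 2 ^ (p + 1)) with hμ₁
  set μ₂ : ℝ := (2 ^ p - 1) * Δ 0 ^ (-p) with hμ₂
  have hμ₁pos : 0 < μ₁ := by
    apply div_pos hp
    positivity
  have hμ₂pos : 0 < μ₂ := by
    apply mul_pos (by linarith)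
    exact rpow_pos_of_pos (hpos 0) _
  set μ : ℝ := min μ₁ μ₂ with hμ
  have hμpos : 0 < μ := lt_min hμ₁pos hμ₂pos
  -- increment step
  have step : ∀ t, N + 1 ≤ t → Δ (t - 1) ^ (-p) + μ ≤ Δ t ^ (-p) := by
    intro t ht
    set b := Δ (t - 1) with hbdef
    set a := Δ t with hadef
    have ha : 0 < a := hpos t
    have hb : 0 < b := hpos (t - 1)
    have hab : a ≤ b := hmono (Nat.sub_le t 1)
    have hr : a ^ (p + 1) ≤ C * (b - a) := by
      rw [← hθp]; exact hrec t (by omega)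
    rcases le_or_gt b (2 * a) with hcase | hcase
    · -- case A
      have htan := tangent_rpow p a b hp ha hab
      have h3 : (b / 2) ^ (p + 1) ≤ a ^ (p + 1) :=
        rpow_le_rpow (by positivity) (by linarith) (by linarith)
      have h5 : b ^ (p + 1) / 2 ^ (p + 1) ≤ C * (b - a) := by
        rw [← div_rpow hb.le (by norm_num)]
        exact h3.trans hr
      have h7 : b ^ (p + 1) / 2 ^ (p + 1) / C ≤ b - a := (div_le_iff₀' hC).mpr h5
      have hbp : (0:ℝ) < b ^ (-p - 1) := rpow_pos_of_pos hb _
      have h6 := mul_le_mul_of_nonneg_left h7 (by positivity : (0:ℝ) ≤ p * b ^ (-p - 1))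
      have h4 : b ^ (-p - 1) * b ^ (p + 1) = 1 := by
        rw [← rpow_add hb]
        norm_num
      have e3 : p * b ^ (-p - 1) * (b ^ (p + 1) / 2 ^ (p + 1) / C) = μ₁ := by
        have h2pp : (0:ℝ) < 2 ^ (p + 1) := rpow_pos_of_pos two_pos _
        rw [hμ₁, show p * b ^ (-p - 1) * (b ^ (p + 1) / 2 ^ (p + 1) / C)
          = p * (b ^ (-p - 1) * b ^ (p + 1)) / (C * 2 ^ (p + 1)) by ring, h4, mul_one]
      rw [e3] at h6
      have : μ ≤ μ₁ := min_le_left _ _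
      linarith
    · -- case B
      have h8 : a ^ (-p) ≥ (b / 2) ^ (-p) := by
        apply rpow_le_rpow_of_nonpos ha (by linarith) (by linarith)
      have h9 : (b / 2) ^ (-p) = 2 ^ p * b ^ (-p) := by
        rw [div_rpow hb.le (by norm_num), rpow_neg (by norm_num : (0:ℝ) ≤ 2)]
        field_simp
      have h10 : Δ 0 ^ (-p) ≤ b ^ (-p) :=
        rpow_le_rpow_of_nonpos hb (hmono (Nat.zero_le _)) (by linarith)
      have hbp : (0:ℝ) < b ^ (-p) := rpow_pos_of_pos hb _
      have : μ ≤ μ₂ := min_le_right _ _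
      rw [hμ₂] at this
      nlinarith
  -- linear growth
  have grow : ∀ k : ℕ, μ * k ≤ Δ (N + 1 + k) ^ (-p) := by
    intro k
    induction k with
    | zero => simpa using (rpow_pos_of_pos (hpos (N + 1)) (-p)).le
    | succ k ih =>
      have hs := step (N + 1 + (k + 1)) (by omega)
      have he : N + 1 + (k + 1) - 1 = N + 1 + k := by omega
      rw [he] at hs
      push_cast
      push_cast at ih
      linarith
  set C' : ℝ := (μ / 2) ^ (-1 / p) with hC'
  have hC'pos : 0 < C' := rpow_pos_of_pos (by linarith) _
  refine ⟨C', hC'pos, max (2 * (N + 1)) 1, fun t ht => ?_⟩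
  have ht1 : 1 ≤ t := le_trans (le_max_right _ _) ht
  have ht2 : 2 * (N + 1) ≤ t := le_trans (le_max_left _ _) ht
  have htpos : (0:ℝ) < t := by exact_mod_cast ht1
  -- f t ≥ μ/2 * t
  have hft : μ / 2 * t ≤ Δ t ^ (-p) := by
    have hk := grow (t - (N + 1))
    have he : N + 1 + (t - (N + 1)) = t := by omega
    rw [he] at hk
    have hcast : (t:ℝ) / 2 ≤ ((t - (N + 1) : ℕ) : ℝ) := by
      have : ((t - (N + 1) : ℕ) : ℝ) = (t:ℝ) - (N + 1 : ℕ) := by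
        push_cast [Nat.cast_sub (by omega : N + 1 ≤ t)]
        ring
      rw [this]
      have : ((N:ℝ) + 1) ≤ (t:ℝ) / 2 := by
        have : ((2 * (N + 1) : ℕ) : ℝ) ≤ (t:ℝ) := by exact_mod_cast ht2
        push_cast at this
        linarith
      push_cast
      linarith
    nlinarith [grow (t - (N+1)), hk, mul_le_mul_of_nonneg_left hcast hμpos.le]
  have hexp : -(1 - θ) / (2 * θ - 1) = -1 / p := by
    rw [hpdef]
    field_simp
  rw [hexp]
  have hμt : (0:ℝ) < μ / 2 * t := by positivity
  have hkey := rpow_le_rpow_of_nonpos hμt hft (show -1/p ≤ 0 from div_nonpos_of_nonpos_of_nonneg (by norm_num) hp.le)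
  have e4 : (Δ t ^ (-p)) ^ (-1 / p) = Δ t := by
    rw [← rpow_mul (hpos t).le]
    rw [show (-p) * (-1 / p) = 1 by field_simp]
    exact rpow_one _
  have e5 : (μ / 2 * t) ^ (-1 / p) = C' * (t:ℝ) ^ (-1 / p) := by
    rw [mul_rpow (by linarith : (0:ℝ) ≤ μ / 2) htpos.le, hC']
  rw [e4, e5] at hkey
  exact hkey
end
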